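/- The bound |V|-1 in the cut-cover lemma is sharp: in the star K_{1,n-1} with unit capacities, the cut separating the center from all leaves cannot be covered by fewer than n-1 cuts each of which is a minimum-capacity cut separating some pair of vertices. -/

import Mathlib

open Classical in
/-- Capacity of the cut `S` in the unit-capacity star `K_{1,n-1}` with center `0`:
the number of star edges (one per leaf `i ≠ 0`) with exactly one endpoint in `S`. -/
noncomputable def starCutCap (n : ℕ) [NeZero n] (S : Finset (Fin n)) : ℕ :=
  (Finset.univ.filter (fun i : Fin n => i ≠ 0 ∧
    (((0 : Fin n) ∈ S ∧ i ∉ S) ∨ ((0 : Fin n) ∉ S ∧ i ∈ S)))).card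

open Classical in
lemma starCutCap_le_one_of_subset_singleton (n : ℕ) [NeZero n] (S : Finset (Fin n))
    (x : Fin n)
    (h : ∀ i : Fin n, i ≠ 0 →
      (((0 : Fin n) ∈ S ∧ i ∉ S) ∨ ((0 : Fin n) ∉ S ∧ i ∈ S)) → i = x) :
    starCutCap n S ≤ 1 := by
  classical
  unfold starCutCap
  calc (Finset.univ.filter (fun i : Fin n => i ≠ 0 ∧
        (((0 : Fin n) ∈ S ∧ i ∉ S) ∨ ((0 : Fin n) ∉ S ∧ i ∈ S)))).card
      ≤ ({x} : Finset (Fin n)).card := by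
        apply Finset.card_le_card
        intro i hi
        simp only [Finset.mem_filter] at hi
        simp [h i hi.2.1 hi.2.2]
    _ = 1 := Finset.card_singleton x

/-- Sharpness of the cut-cover lemma: in the unit-capacity star `K_{1,n-1}` (center `0`,
leaves the `i ≠ 0`), any collection of cuts, each of which is a minimum-capacity cut
separating some pair of distinct vertices, that covers all `n - 1` star edges must contain
at least `n - 1` cuts. -/
theorem stmt6 (n : ℕ) [NeZero n] (hn : 2 ≤ n) (𝒞 : Finset (Finset (Fin n)))
    (hmin : ∀ S ∈ 𝒞, ∃ w v : Fin n, w ≠ v ∧ w ∈ S ∧ v ∉ S ∧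
      ∀ S' : Finset (Fin n), w ∈ S' → v ∉ S' → starCutCap n S ≤ starCutCap n S')
    (hcover : ∀ i : Fin n, i ≠ 0 →
      ∃ S ∈ 𝒞, ((0 : Fin n) ∈ S ∧ i ∉ S) ∨ ((0 : Fin n) ∉ S ∧ i ∈ S)) :
    n - 1 ≤ 𝒞.card := by
  classical
  -- Every cut in 𝒞 has capacity at most 1.
  have hcap : ∀ S ∈ 𝒞, starCutCap n S ≤ 1 := by
    intro S hS
    obtain ⟨w, v, hwv, hwS, hvS, hmin'⟩ := hmin S hS
    by_cases hw : w = 0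
    · -- use S' = univ.erase v
      subst hw
      have hv0 : v ≠ 0 := fun h => hwv h.symm
      refine le_trans (hmin' (Finset.univ.erase v) ?_ ?_) ?_
      · exact Finset.mem_erase.mpr ⟨fun h => hv0 h.symm, Finset.mem_univ _⟩
      · simp
      · apply starCutCap_le_one_of_subset_singleton n _ v
        intro i hi hcross
        rcases hcross with ⟨_, hni⟩ | ⟨h0, _⟩
        · by_contra hne
          exact hni (Finset.mem_erase.mpr ⟨hne, Finset.mem_univ _⟩)
        · exact absurd (Finset.mem_erase.mpr ⟨fun h => hv0 h.symm, Finset.mem_univ _⟩) h0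
    · -- use S' = {w}
      refine le_trans (hmin' ({w} : Finset (Fin n)) (Finset.mem_singleton_self w) ?_) ?_
      · simp [Finset.mem_singleton]; exact fun h => hwv h.symm
      · apply starCutCap_le_one_of_subset_singleton n _ w
        intro i hi hcross
        rcases hcross with ⟨h0, _⟩ | ⟨_, hiw⟩
        · exact absurd (Finset.mem_singleton.mp h0).symm hw
        · exact Finset.mem_singleton.mp hiw
  -- injection from leaves into 𝒞
  have hL : (Finset.univ.filter (fun i : Fin n => i ≠ 0)).card = n - 1 := by
    have : (Finset.univ.filter (fun i : Fin n => i ≠ 0)) = Finset.univ.erase 0 := by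
      ext i; simp [Finset.mem_erase, and_comm]
    rw [this, Finset.card_erase_of_mem (Finset.mem_univ _), Finset.card_univ, Fintype.card_fin]
  rw [← hL]
  apply Finset.card_le_card_of_injOn (fun i => if h : i ≠ 0 then (hcover i h).choose else ∅)
  · intro i hi
    simp only [Finset.mem_coe, Finset.mem_filter] at hi ⊢
    rw [dif_pos hi.2]
    exact (hcover i hi.2).choose_spec.1
  · intro i hi j hj hij
    simp only [Finset.mem_filter, Finset.mem_coe] at hi hj
    simp only at hij
    rw [dif_pos hi.2, dif_pos hj.2] at hij
    obtain ⟨hSC, hicross⟩ := (hcover i hi.2).choose_spec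
    obtain ⟨-, hjcross⟩ := (hcover j hj.2).choose_spec
    rw [← hij] at hjcross
    set S := (hcover i hi.2).choose with hSdef
    by_contra hne
    have hsub : ({i, j} : Finset (Fin n)) ⊆ Finset.univ.filter (fun k : Fin n => k ≠ 0 ∧
        (((0 : Fin n) ∈ S ∧ k ∉ S) ∨ ((0 : Fin n) ∉ S ∧ k ∈ S))) := by
      intro k hk
      rcases Finset.mem_insert.mp hk with rfl | hk
      · simp [hi.2, hicross]
      · rw [Finset.mem_singleton.mp hk]
        simp [hj.2, hjcross]
    have h2 : 2 ≤ starCutCap n S := by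
      have := Finset.card_le_card hsub
      rwa [Finset.card_pair hne] at this
    exact absurd (hcap S hSC) (by omega)
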